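/- In the multidimensional elephant random walk with stops, if 1/2 < r ≤ 1, then Z_n*/n^r converges to 0 almost surely as n → ∞. -/

import Mathlib

open MeasureTheory ProbabilityTheory Filter
open scoped ENNReal

noncomputable section

/-- The `d × d` cyclic permutation matrix `J_d` with ones on the superdiagonal and in
position `(d, 1)`. -/
def cyclicMatrix (d : ℕ) : Matrix (Fin d) (Fin d) ℝ :=
  Matrix.of fun i j => if (j : ℕ) = ((i : ℕ) + 1) % d then 1 else 0

/-- A matrix is measurable entrywise. -/
instance {m n : Type*} : MeasurableSpace (Matrix m n ℝ) :=
  inferInstanceAs (MeasurableSpace (m → n → ℝ))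

instance {m n : Type*} [Countable m] [Countable n] : MeasurableSingletonClass (Matrix m n ℝ) :=
  inferInstanceAs (MeasurableSingletonClass (m → n → ℝ))

theorem cyclic_pow_apply {d : ℕ} (m : ℕ) :
    ∀ i j : Fin d, (cyclicMatrix d ^ m) i j = if (j : ℕ) = ((i : ℕ) + m) % d then 1 else 0 := by
  induction m with
  | zero =>
    intro i j
    simp only [pow_zero, Matrix.one_apply, Nat.add_zero, Nat.mod_eq_of_lt i.isLt]
    by_cases h : i = j
    · simp [h]
    · rw [if_neg h, if_neg (by simpa [Fin.ext_iff, eq_comm] using h)]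
  | succ m ih =>
    intro i j
    have hd : 0 < d := i.pos
    set c : Fin d := ⟨((i : ℕ) + m) % d, Nat.mod_lt _ hd⟩ with hc
    rw [pow_succ, Matrix.mul_apply]
    have : ∀ k : Fin d, (cyclicMatrix d ^ m) i k * (cyclicMatrix d) k j
        = if k = c then (if (j : ℕ) = ((k : ℕ) + 1) % d then (1:ℝ) else 0) else 0 := by
      intro k
      rw [ih i k]
      by_cases hk : k = c
      · simp [hk, cyclicMatrix, hc]
      · rw [if_neg (by simpa [Fin.ext_iff, hc] using hk), if_neg hk, zero_mul]
    rw [Finset.sum_congr rfl (fun k _ => this k), Finset.sum_ite_eq' Finset.univ c]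
    simp only [Finset.mem_univ, if_true, hc]
    rw [Nat.mod_add_mod, Nat.add_assoc]

def signedCyclic (d : ℕ) (em : Fin 2 × Fin d) : Matrix (Fin d) (Fin d) ℝ :=
  (if em.1 = 0 then (1:ℝ) else -1) • (cyclicMatrix d ^ (em.2 : ℕ))

theorem signedCyclic_apply (d : ℕ) (em : Fin 2 × Fin d) (i j : Fin d) :
    signedCyclic d em i j
      = (if em.1 = 0 then (1:ℝ) else -1) * (if (j : ℕ) = ((i : ℕ) + (em.2 : ℕ)) % d then 1 else 0) := by
  rw [signedCyclic, Matrix.smul_apply, cyclic_pow_apply, smul_eq_mul]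

theorem signedCyclic_injective (d : ℕ) : Function.Injective (signedCyclic d) := by
  rintro ⟨e, m⟩ ⟨e', m'⟩ h
  have hd : 0 < d := m.pos
  haveI : NeZero d := ⟨by omega⟩
  have h1 := congrFun (congrFun h ⟨0, hd⟩) ⟨(m : ℕ), m.isLt⟩
  have h2 := congrFun (congrFun h ⟨0, hd⟩) ⟨(m' : ℕ), m'.isLt⟩
  rw [signedCyclic_apply, signedCyclic_apply] at h1 h2
  simp only [Fin.val_zero, Nat.zero_add, Nat.mod_eq_of_lt m.isLt, Nat.mod_eq_of_lt m'.isLt] at h1 h2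
  by_cases hmm : (m : ℕ) = (m' : ℕ)
  · have hm : m = m' := Fin.ext hmm
    subst hm
    have he : e = e' := by
      rcases (by omega : e = 0 ∨ e = 1) with rfl | rfl <;>
        rcases (by omega : e' = 0 ∨ e' = 1) with rfl | rfl <;> revert h1 <;> norm_num
    rw [he]
  · exfalso
    simp only [if_neg hmm, mul_zero, if_true, mul_one] at h1
    rcases (by omega : e = 0 ∨ e = 1) with rfl | rfl <;>
      rcases (by omega : e' = 0 ∨ e' = 1) with rfl | rfl <;> norm_num at h1

theorem signedCyclic_ne_zero (d : ℕ) (em : Fin 2 × Fin d) : signedCyclic d em ≠ 0 := by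
  obtain ⟨e, m⟩ := em
  intro h
  have h1 := congrFun (congrFun h ⟨0, m.pos⟩) ⟨(m : ℕ), m.isLt⟩
  rw [signedCyclic_apply] at h1
  simp only [Fin.val_zero, Nat.zero_add, Nat.mod_eq_of_lt m.isLt, if_pos rfl, mul_one,
    Matrix.zero_apply] at h1
  rcases (by omega : e = 0 ∨ e = 1) with rfl | rfl <;> norm_num at h1

theorem sum_sq_signedCyclic {d : ℕ} (em : Fin 2 × Fin d) (v : Fin d → ℝ) :
    ∑ i, (∑ j, signedCyclic d em i j * v j) ^ 2 = ∑ j, v j ^ 2 := by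
  obtain ⟨e, m⟩ := em
  haveI : NeZero d := NeZero.of_pos m.pos
  have h1 : ∀ i : Fin d, ∑ j, signedCyclic d (e, m) i j * v j
      = (if e = 0 then (1:ℝ) else -1) * v (i + m) := by
    intro i
    have hterm : ∀ j : Fin d, signedCyclic d (e, m) i j * v j
        = if j = i + m then (if e = 0 then (1:ℝ) else -1) * v j else 0 := by
      intro j
      rw [signedCyclic_apply]
      have hcond : ((j : ℕ) = ((i : ℕ) + (m : ℕ)) % d) ↔ j = i + m := by
        rw [Fin.ext_iff, Fin.val_add]
      by_cases hj : j = i + m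
      · rw [if_pos (hcond.mpr hj), if_pos hj, mul_one]
      · rw [if_neg (fun hc => hj (hcond.mp hc)), if_neg hj, mul_zero, zero_mul]
    rw [Finset.sum_congr rfl fun j _ => hterm j, Finset.sum_ite_eq' Finset.univ (i + m)]
    simp
  rw [Finset.sum_congr rfl fun i _ => congrArg (· ^ 2) (h1 i)]
  have h2 : ∀ i : Fin d, ((if e = 0 then (1:ℝ) else -1) * v (i + m)) ^ 2 = v (i + m) ^ 2 := by
    intro i; rcases (by omega : e = 0 ∨ e = 1) with rfl | rfl <;> norm_num
  rw [Finset.sum_congr rfl fun i _ => h2 i]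
  exact Fintype.sum_equiv (Equiv.addRight m) _ _ (fun i => rfl)

theorem euclid_norm_sq {d : ℕ} (x : EuclideanSpace ℝ (Fin d)) : ‖x‖ ^ 2 = ∑ i, x i ^ 2 := by
  rw [EuclideanSpace.norm_eq, Real.sq_sqrt (by positivity)]
  simp [sq_abs]

/-- The multidimensional elephant random walk with stops, with memory parameters
`p`, `q`, `r` satisfying `p + (2d-1)q + r = 1`. -/
structure MERWStops {Ω : Type*} [MeasurableSpace Ω] (P : Measure Ω)
    (d : ℕ) (p q r : ℝ) where
  X : ℕ → Ω → EuclideanSpace ℝ (Fin d)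
  A : ℕ → Ω → Matrix (Fin d) (Fin d) ℝ
  β : ℕ → Ω → ℕ
  hd : 1 ≤ d
  hp : p ∈ Set.Icc (0 : ℝ) 1
  hq : q ∈ Set.Icc (0 : ℝ) 1
  hr : r ∈ Set.Icc (0 : ℝ) 1
  hpqr : p + (2 * (d : ℝ) - 1) * q + r = 1
  measX : ∀ n, Measurable (X n)
  measA : ∀ n, Measurable (A n)
  measβ : ∀ n, Measurable (β n)
  /-- `X 1` is uniformly distributed on `{± e_1, …, ± e_d}`. -/
  hX1 : ∀ i : Fin d,
    P {ω | X 1 ω = EuclideanSpace.single i (1 : ℝ)} = ENNReal.ofReal (1 / (2 * (d : ℝ))) ∧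
    P {ω | X 1 ω = -EuclideanSpace.single i (1 : ℝ)} = ENNReal.ofReal (1 / (2 * (d : ℝ)))
  /-- The recursion `X (n+1) = A (n+1) * X (β n)`. -/
  hrec : ∀ n, 1 ≤ n → ∀ ω, ∀ i, X (n + 1) ω i = ∑ j, A (n + 1) ω i j * X (β n ω) ω j
  /-- `β n` is uniformly distributed on `{1, …, n}`. -/
  hβ : ∀ n, 1 ≤ n → ∀ k ∈ Finset.Icc 1 n, P {ω | β n ω = k} = ENNReal.ofReal (1 / (n : ℝ))
  hAI : ∀ n, 1 ≤ n → P {ω | A (n + 1) ω = 1} = ENNReal.ofReal p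
  hAnegI : ∀ n, 1 ≤ n → P {ω | A (n + 1) ω = -1} = ENNReal.ofReal q
  hAJ : ∀ n, 1 ≤ n → ∀ i ∈ Finset.Icc 1 (d - 1),
    P {ω | A (n + 1) ω = cyclicMatrix d ^ i} = ENNReal.ofReal q
  hAnegJ : ∀ n, 1 ≤ n → ∀ i ∈ Finset.Icc 1 (d - 1),
    P {ω | A (n + 1) ω = -(cyclicMatrix d ^ i)} = ENNReal.ofReal q
  hAzero : ∀ n, 1 ≤ n → P {ω | A (n + 1) ω = 0} = ENNReal.ofReal r
  /-- `A (n+1)`, `β n` and `σ(X_1, …, X_n)` are mutually independent. -/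
  hindep : ∀ n, 1 ≤ n →
    iIndep
      ![MeasurableSpace.comap (A (n + 1)) inferInstance,
        MeasurableSpace.comap (β n) inferInstance,
        ⨆ k ∈ Finset.Icc 1 n, MeasurableSpace.comap (X k) inferInstance] P

namespace MERWStops

variable {Ω : Type*} [MeasurableSpace Ω] {P : Measure Ω} {d : ℕ} {p q r : ℝ}

/-- The number of moves up to time `n` : `Z_n* = ∑_{k=1}^n ‖X_k‖²`. -/
def Zstar (W : MERWStops P d p q r) (n : ℕ) (ω : Ω) : ℝ :=
  ∑ k ∈ Finset.Icc 1 n, ‖W.X k ω‖ ^ 2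

/-- The σ-field `G_n = σ(X_1, …, X_n)`. -/
def G (W : MERWStops P d p q r) (n : ℕ) : MeasurableSpace Ω :=
  ⨆ k ∈ Finset.Icc 1 n, MeasurableSpace.comap (W.X k) inferInstance

/-- The normalizing sequence `a_1 = 1`, `a_n = ∏_{k=1}^{n-1} (1 + (1-r)/k)`. -/
def aseq (r : ℝ) (n : ℕ) : ℝ :=
  ∏ k ∈ Finset.Icc 1 (n - 1), (1 + (1 - r) / (k : ℝ))

end MERWStops

namespace MERWStops


variable {Ω : Type*} [MeasurableSpace Ω] {P : Measure Ω} {d : ℕ} {p q r : ℝ}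

lemma measSet_A_eq (W : MERWStops P d p q r) (n : ℕ) (M : Matrix (Fin d) (Fin d) ℝ) :
    MeasurableSet {ω | W.A n ω = M} := by
  have h : {ω | W.A n ω = M} = W.A n ⁻¹' {M} := by ext ω; simp
  rw [h]; exact (W.measA n) (measurableSet_singleton _)

lemma aeA (W : MERWStops P d p q r) [IsProbabilityMeasure P] (n : ℕ) (hn : 1 ≤ n) :
    ∀ᵐ ω ∂P, W.A (n+1) ω = 0 ∨ ∃ em : Fin 2 × Fin d, W.A (n+1) ω = signedCyclic d em := by
  haveI : NeZero d := ⟨by have := W.hd; omega⟩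
  set E : Option (Fin 2 × Fin d) → Set Ω := fun o =>
    Option.rec {ω | W.A (n+1) ω = 0} (fun em => {ω | W.A (n+1) ω = signedCyclic d em}) o with hE
  have hmeas : ∀ o, MeasurableSet (E o) := by
    rintro (_ | em) <;> exact W.measSet_A_eq _ _
  have hdisj : Pairwise (Function.onFun Disjoint E) := by
    rintro o o' hne
    refine Set.disjoint_left.mpr fun ω h1 h2 => ?_
    match o, o' with
    | none, none => exact hne rfl
    | none, some em => exact signedCyclic_ne_zero d em (h2.symm.trans h1)
    | some em, none => exact signedCyclic_ne_zero d em (h1.symm.trans h2)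
    | some em, some em' =>
      exact hne (by rw [signedCyclic_injective d (h1.symm.trans h2)])
  have hG0 : ∀ e : Fin 2, signedCyclic d (e, 0) = if e = 0 then (1 : Matrix (Fin d) (Fin d) ℝ) else -1 := by
    intro e
    rcases (by omega : e = 0 ∨ e = 1) with rfl | rfl <;>
      simp [signedCyclic, Fin.val_zero, pow_zero]
  have hGm : ∀ (e : Fin 2) (m : Fin d), m ≠ 0 →
      P (E (some (e, m))) = ENNReal.ofReal q := by
    intro e m hm
    have hmem : (m : ℕ) ∈ Finset.Icc 1 (d - 1) := by
      refine Finset.mem_Icc.mpr ⟨?_, by have := m.isLt; omega⟩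
      have : (m : ℕ) ≠ 0 := fun h => hm (Fin.ext (by simp [h]))
      omega
    rcases (by omega : e = 0 ∨ e = 1) with rfl | rfl
    · have h0 : signedCyclic d (0, m) = cyclicMatrix d ^ (m : ℕ) := by
        simp [signedCyclic]
      show P {ω | W.A (n+1) ω = signedCyclic d (0, m)} = ENNReal.ofReal q
      rw [h0]; exact W.hAJ n hn _ hmem
    · have h1 : signedCyclic d (1, m) = -(cyclicMatrix d ^ (m : ℕ)) := by
        simp [signedCyclic]
      show P {ω | W.A (n+1) ω = signedCyclic d (1, m)} = ENNReal.ofReal q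
      rw [h1]; exact W.hAnegJ n hn _ hmem
  have hq0 : 0 ≤ q := W.hq.1
  have hp0 : 0 ≤ p := W.hp.1
  have hr0 : 0 ≤ r := W.hr.1
  have hd1 : (0:ℝ) ≤ (d:ℝ) - 1 := by
    have := W.hd; have : (1:ℝ) ≤ (d:ℝ) := by exact_mod_cast this
    linarith
  have hq' : (d - 1) • ENNReal.ofReal q = ENNReal.ofReal (((d:ℝ) - 1) * q) := by
    rw [nsmul_eq_mul, ← ENNReal.ofReal_natCast (d-1), ← ENNReal.ofReal_mul (by positivity)]
    congr 1
    rw [Nat.cast_sub W.hd, Nat.cast_one]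
  have hsum : ∑' o : Option (Fin 2 × Fin d), P (E o) = 1 := by
    rw [tsum_fintype, Fintype.sum_option]
    have hnone : P (E none) = ENNReal.ofReal r := W.hAzero n hn
    have he : ∀ e : Fin 2, ∑ m : Fin d, P (E (some (e, m)))
        = (if e = 0 then ENNReal.ofReal p else ENNReal.ofReal q) + (d - 1) • ENNReal.ofReal q := by
      intro e
      rw [← Finset.add_sum_erase Finset.univ _ (Finset.mem_univ (0 : Fin d))]
      congr 1
      · show P {ω | W.A (n+1) ω = signedCyclic d (e, 0)} = _
        rw [hG0 e]
        rcases (by omega : e = 0 ∨ e = 1) with rfl | rfl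
        · simpa using W.hAI n hn
        · simpa using W.hAnegI n hn
      · rw [Finset.sum_congr rfl (fun m hm => hGm e m (Finset.mem_erase.mp hm).1),
          Finset.sum_const, Finset.card_erase_of_mem (Finset.mem_univ _),
          Finset.card_univ, Fintype.card_fin]
    rw [Fintype.sum_prod_type, Fin.sum_univ_two, he 0, he 1, hnone]
    rw [if_pos rfl, if_neg (by norm_num), hq']
    rw [← ENNReal.ofReal_add hp0 (by positivity), ← ENNReal.ofReal_add hq0 (by positivity),
      ← ENNReal.ofReal_add (by positivity) (by positivity),
      ← ENNReal.ofReal_add hr0 (by positivity)]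
    rw [show r + (p + ((d:ℝ)-1)*q + (q + ((d:ℝ)-1)*q)) = p + (2*(d:ℝ)-1)*q + r by ring,
      W.hpqr, ENNReal.ofReal_one]
  have hU : P (⋃ o, E o) = 1 := by rw [measure_iUnion hdisj hmeas]; exact hsum
  have hcompl := (prob_compl_eq_zero_iff (MeasurableSet.iUnion hmeas)).mpr hU
  have hae : ∀ᵐ ω ∂P, ω ∈ ⋃ o, E o := by
    rw [ae_iff]
    exact hcompl
  filter_upwards [hae] with ω hω
  rcases Set.mem_iUnion.mp hω with ⟨o, ho⟩
  match o with
  | none => exact Or.inl ho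
  | some em => exact Or.inr ⟨em, ho⟩

lemma aeBeta (W : MERWStops P d p q r) [IsProbabilityMeasure P] (n : ℕ) (hn : 1 ≤ n) :
    ∀ᵐ ω ∂P, W.β n ω ∈ Finset.Icc 1 n := by
  set F : ℕ → Set Ω := fun k => {ω | W.β n ω = k} with hF
  have hmeas : ∀ k, MeasurableSet (F k) := by
    intro k
    have h : F k = W.β n ⁻¹' {k} := by ext ω; simp [hF]
    rw [h]; exact (W.measβ n) (measurableSet_singleton _)
  have hdisj : (↑(Finset.Icc 1 n) : Set ℕ).PairwiseDisjoint F := by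
    intro a _ b _ hab
    refine Set.disjoint_left.mpr fun ω h1 h2 => hab (h1.symm.trans h2)
  have hU : P (⋃ k ∈ Finset.Icc 1 n, F k) = 1 := by
    rw [measure_biUnion_finset hdisj (fun k _ => hmeas k)]
    rw [Finset.sum_congr rfl (fun k hk => W.hβ n hn k hk), Finset.sum_const, Nat.card_Icc]
    have hne : ((n:ℝ)) ≠ 0 := by positivity
    rw [show n + 1 - 1 = n by omega, nsmul_eq_mul, ← ENNReal.ofReal_natCast n,
      ← ENNReal.ofReal_mul (by positivity), mul_one_div, div_self hne, ENNReal.ofReal_one]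
  have hcompl := (prob_compl_eq_zero_iff
    (Finset.measurableSet_biUnion _ (fun k _ => hmeas k))).mpr hU
  have hae : ∀ᵐ ω ∂P, ω ∈ ⋃ k ∈ Finset.Icc 1 n, F k := by rw [ae_iff]; exact hcompl
  filter_upwards [hae] with ω hω
  rcases Set.mem_iUnion₂.mp hω with ⟨k, hk, hωk⟩
  have : W.β n ω = k := hωk
  rw [this]; exact hk

lemma norm_euclid_single {d : ℕ} (i : Fin d) : ‖EuclideanSpace.single i (1:ℝ)‖ = 1 := by
  have h := euclid_norm_sq (EuclideanSpace.single i (1:ℝ))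
  have h2 : ∑ j, (EuclideanSpace.single i (1:ℝ)) j ^ 2 = 1 := by
    simp [EuclideanSpace.single_apply]
  rw [h2] at h
  rw [← Real.sqrt_sq (norm_nonneg _), h, Real.sqrt_one]

lemma aeX1 (W : MERWStops P d p q r) [IsProbabilityMeasure P] :
    ∀ᵐ ω ∂P, ‖W.X 1 ω‖ = 1 := by
  haveI : NeZero d := ⟨by have := W.hd; omega⟩
  set E : Fin 2 × Fin d → Set Ω := fun ei =>
    {ω | W.X 1 ω = (if ei.1 = 0 then (1:ℝ) else -1) • EuclideanSpace.single ei.2 1} with hE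
  have hmeas : ∀ ei, MeasurableSet (E ei) := by
    intro ei
    have h : E ei = W.X 1 ⁻¹' {(if ei.1 = 0 then (1:ℝ) else -1) • EuclideanSpace.single ei.2 1} := by
      ext ω; simp [hE]
    rw [h]; exact (W.measX 1) (measurableSet_singleton _)
  have hval : ∀ (e : Fin 2) (i : Fin d) (j : Fin d),
      ((if e = 0 then (1:ℝ) else -1) • EuclideanSpace.single i (1:ℝ)) j
        = (if e = 0 then (1:ℝ) else -1) * (if j = i then 1 else 0) := by
    intro e i j
    rw [PiLp.smul_apply, EuclideanSpace.single_apply, smul_eq_mul]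
  have hdisj : Pairwise (Function.onFun Disjoint E) := by
    rintro ⟨e, i⟩ ⟨e', i'⟩ hne
    refine Set.disjoint_left.mpr fun ω h1 h2 => ?_
    have hv : (if e = 0 then (1:ℝ) else -1) • EuclideanSpace.single i (1:ℝ)
        = (if e' = 0 then (1:ℝ) else -1) • EuclideanSpace.single i' 1 :=
      (h1 : W.X 1 ω = _).symm.trans h2
    have hvi := congrArg (fun v : EuclideanSpace ℝ (Fin d) => v i) hv
    dsimp only at hvi
    rw [hval, hval] at hvi
    simp only [if_pos rfl, mul_one] at hvi
    by_cases hii : i = i'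
    · subst hii
      rw [if_pos rfl, mul_one] at hvi
      refine hne ?_
      rcases (by omega : e = 0 ∨ e = 1) with rfl | rfl <;>
        rcases (by omega : e' = 0 ∨ e' = 1) with rfl | rfl <;> revert hvi <;> norm_num
    · rw [if_neg hii, mul_zero] at hvi
      rcases (by omega : e = 0 ∨ e = 1) with rfl | rfl <;> norm_num at hvi
  have hsum : ∑' ei : Fin 2 × Fin d, P (E ei) = 1 := by
    rw [tsum_fintype]
    have hone : ∀ ei : Fin 2 × Fin d, P (E ei) = ENNReal.ofReal (1 / (2 * (d:ℝ))) := by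
      rintro ⟨e, i⟩
      rcases (by omega : e = 0 ∨ e = 1) with rfl | rfl
      · have : E (0, i) = {ω | W.X 1 ω = EuclideanSpace.single i 1} := by
          ext ω; simp [hE]
        rw [this]; exact (W.hX1 i).1
      · have : E (1, i) = {ω | W.X 1 ω = -EuclideanSpace.single i 1} := by
          ext ω; simp [hE]
        rw [this]; exact (W.hX1 i).2
    rw [Finset.sum_congr rfl (fun ei _ => hone ei), Finset.sum_const, Finset.card_univ]
    have hcard : Fintype.card (Fin 2 × Fin d) = 2 * d := by simp
    have hdne : (2 * (d:ℝ)) ≠ 0 := by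
      have := W.hd; have : (1:ℝ) ≤ (d:ℝ) := by exact_mod_cast this
      positivity
    rw [hcard, nsmul_eq_mul, ← ENNReal.ofReal_natCast, ← ENNReal.ofReal_mul (by positivity)]
    push_cast
    rw [mul_one_div, div_self hdne, ENNReal.ofReal_one]
  have hU : P (⋃ ei, E ei) = 1 := by rw [measure_iUnion hdisj hmeas]; exact hsum
  have hcompl := (prob_compl_eq_zero_iff (MeasurableSet.iUnion hmeas)).mpr hU
  have hae : ∀ᵐ ω ∂P, ω ∈ ⋃ ei, E ei := by rw [ae_iff]; exact hcompl
  filter_upwards [hae] with ω hω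
  rcases Set.mem_iUnion.mp hω with ⟨⟨e, i⟩, hei⟩
  have hx : W.X 1 ω = (if e = 0 then (1:ℝ) else -1) • EuclideanSpace.single i 1 := hei
  rw [hx, norm_smul]
  rcases (by omega : e = 0 ∨ e = 1) with rfl | rfl <;>
    simp [norm_euclid_single]

lemma norm_dichotomy (W : MERWStops P d p q r) [IsProbabilityMeasure P] :
    ∀ᵐ ω ∂P, ∀ k, 1 ≤ k → (W.X k ω = 0 ∨ ‖W.X k ω‖ = 1) := by
  have hstep : ∀ n : ℕ, ∀ᵐ ω ∂P, 1 ≤ n →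
      ((W.A (n+1) ω = 0 ∨ ∃ em, W.A (n+1) ω = signedCyclic d em)
        ∧ W.β n ω ∈ Finset.Icc 1 n) := by
    intro n
    by_cases hn : 1 ≤ n
    · filter_upwards [W.aeA n hn, W.aeBeta n hn] with ω h1 h2
      exact fun _ => ⟨h1, h2⟩
    · exact Filter.Eventually.of_forall (fun ω h => absurd h hn)
  filter_upwards [W.aeX1, ae_all_iff.mpr hstep] with ω h1 hsteps
  intro k
  induction k using Nat.strong_induction_on with
  | _ k ih =>
    intro hk
    rcases k with _ | _ | n
    · omega
    · right; exact h1
    · obtain ⟨hA, hβ⟩ := hsteps (n+1) (by omega)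
      have hrec := W.hrec (n+1) (by omega) ω
      rcases hA with hA0 | ⟨em, hAem⟩
      · left
        have hz : ∀ i, W.X (n+2) ω i = 0 := by
          intro i; rw [hrec i, hA0]; simp
        ext i
        exact hz i
      · have hnormsq : ‖W.X (n+2) ω‖^2 = ‖W.X (W.β (n+1) ω) ω‖^2 := by
          rw [euclid_norm_sq, euclid_norm_sq,
            Finset.sum_congr rfl (fun i _ => by rw [hrec i, hAem])]
          exact sum_sq_signedCyclic em _
        have hnorm : ‖W.X (n+2) ω‖ = ‖W.X (W.β (n+1) ω) ω‖ := by
          rw [← Real.sqrt_sq (norm_nonneg _), hnormsq, Real.sqrt_sq (norm_nonneg _)]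
        obtain ⟨hβ1, hβ2⟩ := Finset.mem_Icc.mp hβ
        rcases ih (W.β (n+1) ω) (by omega) hβ1 with h0 | hone
        · left
          have h00 : ‖W.X (n+2) ω‖ = 0 := by rw [hnorm, h0, norm_zero]
          exact norm_eq_zero.mp h00
        · right; rwa [hnorm]

lemma sumA (W : MERWStops P d p q r) [IsProbabilityMeasure P] (n : ℕ) (hn : 1 ≤ n) :
    ∑ em : Fin 2 × Fin d, P {ω | W.A (n+1) ω = signedCyclic d em}
      = ENNReal.ofReal (1 - r) := by
  haveI : NeZero d := ⟨by have := W.hd; omega⟩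
  have hq0 : 0 ≤ q := W.hq.1
  have hp0 : 0 ≤ p := W.hp.1
  have hd1 : (0:ℝ) ≤ (d:ℝ) - 1 := by
    have h := W.hd; have h2 : (1:ℝ) ≤ (d:ℝ) := by exact_mod_cast h
    linarith
  have hG0 : ∀ e : Fin 2, signedCyclic d (e, 0)
      = if e = 0 then (1 : Matrix (Fin d) (Fin d) ℝ) else -1 := by
    intro e
    rcases (by omega : e = 0 ∨ e = 1) with rfl | rfl <;>
      simp [signedCyclic, Fin.val_zero, pow_zero]
  have hGm : ∀ (e : Fin 2) (m : Fin d), m ≠ 0 →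
      P {ω | W.A (n+1) ω = signedCyclic d (e, m)} = ENNReal.ofReal q := by
    intro e m hm
    have hmem : (m : ℕ) ∈ Finset.Icc 1 (d - 1) := by
      refine Finset.mem_Icc.mpr ⟨?_, by have := m.isLt; omega⟩
      have : (m : ℕ) ≠ 0 := fun h => hm (Fin.ext (by simp [h]))
      omega
    rcases (by omega : e = 0 ∨ e = 1) with rfl | rfl
    · have h0 : signedCyclic d (0, m) = cyclicMatrix d ^ (m : ℕ) := by
        simp [signedCyclic]
      rw [h0]; exact W.hAJ n hn _ hmem
    · have h1 : signedCyclic d (1, m) = -(cyclicMatrix d ^ (m : ℕ)) := by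
        simp [signedCyclic]
      rw [h1]; exact W.hAnegJ n hn _ hmem
  have hq' : (d - 1) • ENNReal.ofReal q = ENNReal.ofReal (((d:ℝ) - 1) * q) := by
    rw [nsmul_eq_mul, ← ENNReal.ofReal_natCast (d-1), ← ENNReal.ofReal_mul (by positivity)]
    congr 1
    rw [Nat.cast_sub W.hd, Nat.cast_one]
  have he : ∀ e : Fin 2, ∑ m : Fin d, P {ω | W.A (n+1) ω = signedCyclic d (e, m)}
      = (if e = 0 then ENNReal.ofReal p else ENNReal.ofReal q) + (d - 1) • ENNReal.ofReal q := by
    intro e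
    rw [← Finset.add_sum_erase Finset.univ _ (Finset.mem_univ (0 : Fin d))]
    congr 1
    · rw [hG0 e]
      rcases (by omega : e = 0 ∨ e = 1) with rfl | rfl
      · simpa using W.hAI n hn
      · simpa using W.hAnegI n hn
    · rw [Finset.sum_congr rfl (fun m hm => hGm e m (Finset.mem_erase.mp hm).1),
        Finset.sum_const, Finset.card_erase_of_mem (Finset.mem_univ _),
        Finset.card_univ, Fintype.card_fin]
  rw [Fintype.sum_prod_type, Fin.sum_univ_two, he 0, he 1]
  rw [if_pos rfl, if_neg (by norm_num), hq']
  rw [← ENNReal.ofReal_add hp0 (by positivity), ← ENNReal.ofReal_add hq0 (by positivity),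
    ← ENNReal.ofReal_add (by positivity) (by positivity)]
  congr 1
  have := W.hpqr
  have hc : ((d:ℝ) - 1) * q + ((d:ℝ) - 1) * q + q = (2 * (d:ℝ) - 1) * q := by ring
  linarith [hc]

lemma indep_triple (W : MERWStops P d p q r) [IsProbabilityMeasure P] (n : ℕ) (hn : 1 ≤ n)
    (k : ℕ) (hk : k ∈ Finset.Icc 1 n) (M : Matrix (Fin d) (Fin d) ℝ) :
    P ({ω | W.A (n+1) ω = M} ∩ ({ω | W.β n ω = k} ∩ {ω | W.X k ω ≠ 0}))
      = P {ω | W.A (n+1) ω = M} * (P {ω | W.β n ω = k} * P {ω | W.X k ω ≠ 0}) := by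
  set msp : Fin 3 → MeasurableSpace Ω :=
    ![MeasurableSpace.comap (W.A (n + 1)) inferInstance,
      MeasurableSpace.comap (W.β n) inferInstance,
      ⨆ j ∈ Finset.Icc 1 n, MeasurableSpace.comap (W.X j) inferInstance] with hmsp
  have hind : iIndep msp P := W.hindep n hn
  set f : Fin 3 → Set Ω :=
    ![{ω | W.A (n+1) ω = M}, {ω | W.β n ω = k}, {ω | W.X k ω ≠ 0}] with hf
  have hmeas : ∀ i : Fin 3, MeasurableSet[msp i] (f i) := by
    intro i
    fin_cases i <;>
      simp only [hmsp, hf, Matrix.cons_val_zero, Matrix.cons_val_one, Matrix.head_cons,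
        Matrix.cons_val_two, Matrix.tail_cons, Fin.mk_one, Fin.mk_zero]
    · exact ⟨{M}, measurableSet_singleton M, by ext ω; simp⟩
    · exact ⟨{k}, measurableSet_singleton k, by ext ω; simp⟩
    · have hle : MeasurableSpace.comap (W.X k) inferInstance
          ≤ ⨆ j ∈ Finset.Icc 1 n, MeasurableSpace.comap (W.X j) inferInstance :=
        le_iSup₂ (f := fun j (_ : j ∈ Finset.Icc 1 n) => MeasurableSpace.comap (W.X j) inferInstance) k hk
      refine hle _ ⟨{0}ᶜ, (measurableSet_singleton _).compl, ?_⟩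
      ext ω; simp
  have h := hind.meas_iInter hmeas
  have hI : (⋂ i, f i) = {ω | W.A (n+1) ω = M} ∩ ({ω | W.β n ω = k} ∩ {ω | W.X k ω ≠ 0}) := by
    ext ω
    simp [hf, Fin.forall_fin_succ, Fin.forall_fin_one, and_assoc]
  rw [hI] at h
  rw [h, Fin.prod_univ_three]
  simp only [hf, Matrix.cons_val_zero, Matrix.cons_val_one, Matrix.head_cons,
    Matrix.cons_val_two, Matrix.tail_cons]
  rw [mul_assoc]

lemma measSet_X_ne (W : MERWStops P d p q r) (k : ℕ) :
    MeasurableSet {ω | W.X k ω ≠ 0} := by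
  have h : {ω | W.X k ω ≠ 0} = W.X k ⁻¹' {0}ᶜ := by ext ω; simp
  rw [h]; exact (W.measX k) (measurableSet_singleton _).compl

lemma measure_rec (W : MERWStops P d p q r) [IsProbabilityMeasure P] (n : ℕ) (hn : 1 ≤ n) :
    P {ω | W.X (n+1) ω ≠ 0}
      = ENNReal.ofReal ((1 - r) / n) * ∑ k ∈ Finset.Icc 1 n, P {ω | W.X k ω ≠ 0} := by
  classical
  set piece : ℕ × (Fin 2 × Fin d) → Set Ω := fun x =>
    {ω | W.A (n+1) ω = signedCyclic d x.2} ∩ ({ω | W.β n ω = x.1} ∩ {ω | W.X x.1 ω ≠ 0})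
    with hpiece
  set s : Finset (ℕ × (Fin 2 × Fin d)) := (Finset.Icc 1 n) ×ˢ Finset.univ with hs
  have hkey : ∀ (ω : Ω) (em : Fin 2 × Fin d), W.A (n+1) ω = signedCyclic d em →
      ‖W.X (n+1) ω‖^2 = ‖W.X (W.β n ω) ω‖^2 := by
    intro ω em hA
    rw [euclid_norm_sq, euclid_norm_sq,
      Finset.sum_congr rfl (fun i _ => by rw [W.hrec n hn ω i, hA])]
    exact sum_sq_signedCyclic em _
  have hae : {ω | W.X (n+1) ω ≠ 0} =ᵐ[P] ⋃ x ∈ s, piece x := by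
    rw [Filter.eventuallyEq_set]
    filter_upwards [W.aeA n hn, W.aeBeta n hn] with ω hA hβ
    constructor
    · intro hD
      rcases hA with hA0 | ⟨em, hAem⟩
      · exfalso
        refine hD ?_
        ext i
        rw [W.hrec n hn ω i, hA0]
        simp
      · refine Set.mem_biUnion (show (W.β n ω, em) ∈ s by
          simp [hs, Finset.mem_product, hβ]) ?_
        refine ⟨hAem, rfl, ?_⟩
        intro hXk
        refine hD ?_
        have h2 := hkey ω em hAem
        rw [hXk, norm_zero] at h2
        have h3 : ‖W.X (n+1) ω‖ = 0 := by
          have := sq_eq_zero_iff.mp (by rw [h2]; ring)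
          exact this
        exact norm_eq_zero.mp h3
    · intro hU
      rcases Set.mem_iUnion₂.mp hU with ⟨⟨k, em⟩, hks, hmem⟩
      obtain ⟨hAem, hβk, hXk⟩ := hmem
      have hβk' : W.β n ω = k := hβk
      have h2 := hkey ω em hAem
      rw [hβk'] at h2
      intro h0
      refine hXk ?_
      have h3 : ‖W.X k ω‖^2 = 0 := by rw [← h2, h0, norm_zero]; ring
      exact norm_eq_zero.mp (sq_eq_zero_iff.mp h3)
  have hmeaspiece : ∀ x, MeasurableSet (piece x) := by
    intro x
    exact ((W.measSet_A_eq _ _).inter (((by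
      have h : {ω | W.β n ω = x.1} = W.β n ⁻¹' {x.1} := by ext ω; simp
      rw [h]; exact (W.measβ n) (measurableSet_singleton _))
        : MeasurableSet {ω | W.β n ω = x.1}).inter (W.measSet_X_ne x.1)))
  have hdisj : (↑s : Set (ℕ × (Fin 2 × Fin d))).PairwiseDisjoint piece := by
    rintro ⟨k, em⟩ _ ⟨k', em'⟩ _ hne
    refine Set.disjoint_left.mpr fun ω h1 h2 => ?_
    obtain ⟨hA1, hβ1, _⟩ := h1
    obtain ⟨hA2, hβ2, _⟩ := h2
    refine hne ?_
    have hkk : k = k' := (hβ1 : W.β n ω = k).symm.trans hβ2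
    have hemem : em = em' := signedCyclic_injective d ((hA1 : _ = _).symm.trans hA2)
    rw [hkk, hemem]
  rw [measure_congr hae, measure_biUnion_finset hdisj (fun x _ => hmeaspiece x)]
  rw [hs, Finset.sum_product]
  have hterm : ∀ k ∈ Finset.Icc 1 n, ∑ em : Fin 2 × Fin d, P (piece (k, em))
      = ENNReal.ofReal ((1 - r) / n) * P {ω | W.X k ω ≠ 0} := by
    intro k hk
    have h1 : ∀ em : Fin 2 × Fin d, P (piece (k, em))
        = P {ω | W.A (n+1) ω = signedCyclic d em} * (P {ω | W.β n ω = k} * P {ω | W.X k ω ≠ 0}) :=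
      fun em => W.indep_triple n hn k hk _
    rw [Finset.sum_congr rfl (fun em _ => h1 em), ← Finset.sum_mul, W.sumA n hn,
      W.hβ n hn k hk]
    rw [← mul_assoc, ← ENNReal.ofReal_mul (by have := W.hr.2; linarith), mul_one_div]
  rw [Finset.sum_congr rfl hterm, ← Finset.mul_sum]

lemma measure_X1_ne (W : MERWStops P d p q r) [IsProbabilityMeasure P] :
    P {ω | W.X 1 ω ≠ 0} = 1 := by
  have hae : ∀ᵐ ω ∂P, ω ∈ {ω | W.X 1 ω ≠ 0} := by
    filter_upwards [W.aeX1] with ω h1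
    show W.X 1 ω ≠ 0
    intro h0
    rw [h0, norm_zero] at h1
    norm_num at h1
  have h0 : P {ω | W.X 1 ω ≠ 0}ᶜ = 0 := by
    rw [Set.compl_setOf]
    rw [ae_iff] at hae
    exact hae
  exact (prob_compl_eq_zero_iff (W.measSet_X_ne 1)).mp h0

lemma sum_bound (W : MERWStops P d p q r) [IsProbabilityMeasure P] (n : ℕ) (hn : 1 ≤ n) :
    ∑ k ∈ Finset.Icc 1 n, P {ω | W.X k ω ≠ 0}
      ≤ ENNReal.ofReal (Real.exp 1 * (n:ℝ) ^ (1 - r)) := by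
  have hr1 : r ≤ 1 := W.hr.2
  have hr0 : 0 ≤ r := W.hr.1
  have main : ∀ m, 1 ≤ m → ∑ k ∈ Finset.Icc 1 m, P {ω | W.X k ω ≠ 0}
      ≤ ENNReal.ofReal (Real.exp ((1-r) * ∑ k ∈ Finset.Icc 1 (m-1), (k:ℝ)⁻¹)) := by
    intro m hm
    induction m, hm using Nat.le_induction with
    | base =>
      simp only [Finset.Icc_self, Finset.sum_singleton, W.measure_X1_ne]
      norm_num
    | succ m hm ih =>
      have hstep := ih
      rw [Finset.sum_Icc_succ_top (by omega : 1 ≤ m + 1), W.measure_rec m hm]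
      have hfac : ∑ k ∈ Finset.Icc 1 m, P {ω | W.X k ω ≠ 0}
            + ENNReal.ofReal ((1 - r)/m) * ∑ k ∈ Finset.Icc 1 m, P {ω | W.X k ω ≠ 0}
          = (1 + ENNReal.ofReal ((1 - r)/m)) * ∑ k ∈ Finset.Icc 1 m, P {ω | W.X k ω ≠ 0} := by
        rw [add_mul, one_mul]
      rw [hfac]
      have h1 : (1 + ENNReal.ofReal ((1 - r)/m)) * ∑ k ∈ Finset.Icc 1 m, P {ω | W.X k ω ≠ 0}
          ≤ (1 + ENNReal.ofReal ((1 - r)/m))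
            * ENNReal.ofReal (Real.exp ((1-r) * ∑ k ∈ Finset.Icc 1 (m-1), (k:ℝ)⁻¹)) :=
        mul_le_mul_right hstep _
      refine h1.trans ?_
      have hdiv : (0:ℝ) ≤ (1 - r)/m := div_nonneg (by linarith) (Nat.cast_nonneg m)
      rw [← ENNReal.ofReal_one, ← ENNReal.ofReal_add (by norm_num) hdiv,
        ← ENNReal.ofReal_mul (by linarith)]
      apply ENNReal.ofReal_le_ofReal
      have hsum' : ∑ k ∈ Finset.Icc 1 (m+1-1), (k:ℝ)⁻¹
          = ∑ k ∈ Finset.Icc 1 (m-1), (k:ℝ)⁻¹ + ((m:ℝ))⁻¹ := by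
        have hm' : m - 1 + 1 = m := by omega
        rw [show m + 1 - 1 = m by omega, ← hm', Finset.sum_Icc_succ_top (by omega)]
        rw [hm']
      rw [hsum', mul_add, Real.exp_add, mul_comm (Real.exp _)]
      apply mul_le_mul_of_nonneg_right _ (Real.exp_nonneg _)
      have := Real.add_one_le_exp ((1-r) * (m:ℝ)⁻¹)
      rw [div_eq_mul_inv]
      linarith
  refine (main n hn).trans (ENNReal.ofReal_le_ofReal ?_)
  have hharm : ∑ k ∈ Finset.Icc 1 (n-1), (k:ℝ)⁻¹ ≤ 1 + Real.log (n-1 : ℕ) := by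
    have h := harmonic_le_one_add_log (n-1)
    rw [harmonic_eq_sum_Icc] at h
    push_cast at h
    exact h
  have hlog : Real.log ((n-1 : ℕ):ℝ) ≤ Real.log (n:ℝ) := by
    rcases Nat.eq_or_lt_of_le hn with h1 | h2
    · rw [← h1]; norm_num
    · apply Real.log_le_log (by
        have : 1 ≤ n - 1 := by omega
        exact_mod_cast Nat.cast_pos.mpr (by omega : 0 < n - 1))
      exact_mod_cast Nat.sub_le n 1
  have hexp : (1-r) * ∑ k ∈ Finset.Icc 1 (n-1), (k:ℝ)⁻¹ ≤ (1-r) * (1 + Real.log n) := by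
    apply mul_le_mul_of_nonneg_left _ (by linarith)
    linarith
  calc Real.exp ((1-r) * ∑ k ∈ Finset.Icc 1 (n-1), (k:ℝ)⁻¹)
      ≤ Real.exp ((1-r) * (1 + Real.log n)) := Real.exp_le_exp.mpr hexp
    _ = Real.exp (1-r) * Real.exp ((1-r) * Real.log n) := by
        rw [← Real.exp_add]; ring_nf
    _ ≤ Real.exp 1 * (n:ℝ) ^ (1 - r) := by
        have hnpos : (0:ℝ) < n := by exact_mod_cast hn
        rw [Real.rpow_def_of_pos hnpos, mul_comm (Real.log _)]
        exact mul_le_mul_of_nonneg_right (Real.exp_le_exp.mpr (by linarith))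
          (Real.exp_nonneg _)

lemma markov (W : MERWStops P d p q r) [IsProbabilityMeasure P] (n : ℕ) (a : ℝ≥0∞)
    (ha0 : a ≠ 0) (hatop : a ≠ ⊤) :
    P {ω | a ≤ ∑ k ∈ Finset.Icc 1 n, ({ω' | W.X k ω' ≠ 0}).indicator 1 ω}
      ≤ (∑ k ∈ Finset.Icc 1 n, P {ω | W.X k ω ≠ 0}) / a := by
  have hmeas : Measurable (fun ω =>
      ∑ k ∈ Finset.Icc 1 n, ({ω' | W.X k ω' ≠ 0}).indicator (1 : Ω → ℝ≥0∞) ω) :=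
    Finset.measurable_sum _ (fun k _ => measurable_one.indicator (W.measSet_X_ne k))
  have hlin : ∫⁻ ω, (∑ k ∈ Finset.Icc 1 n, ({ω' | W.X k ω' ≠ 0}).indicator 1 ω) ∂P
      = ∑ k ∈ Finset.Icc 1 n, P {ω | W.X k ω ≠ 0} := by
    rw [lintegral_finset_sum _ (fun k _ => measurable_one.indicator (W.measSet_X_ne k))]
    exact Finset.sum_congr rfl fun k _ => lintegral_indicator_one (W.measSet_X_ne k)
  have h := mul_meas_ge_le_lintegral₀ (μ := P) hmeas.aemeasurable a
  rw [hlin] at h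
  rw [ENNReal.le_div_iff_mul_le (Or.inl ha0) (Or.inl hatop)]
  rwa [mul_comm] at h

end MERWStops

/-- In the MERW with stops, if `1/2 < r ≤ 1`, then `Z_n*/n^r → 0` a.s. -/
theorem merwStops_lln_of_half_lt_r
    {Ω : Type*} [MeasurableSpace Ω] {P : Measure Ω} [IsProbabilityMeasure P]
    {d : ℕ} {p q r : ℝ} (W : MERWStops P d p q r) (hr : 1 / 2 < r) :
    ∀ᵐ ω ∂P, Tendsto (fun n : ℕ => W.Zstar n ω / (n : ℝ) ^ r) atTop (nhds 0) := by
  classical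
  have hr1 : r ≤ 1 := W.hr.2
  have hr0 : 0 ≤ r := W.hr.1
  set G : ℕ → Ω → ℝ≥0∞ := fun n ω =>
    ∑ k ∈ Finset.Icc 1 n, ({ω' | W.X k ω' ≠ 0}).indicator 1 ω with hG
  set ρ : ℝ := (2:ℝ) ^ (1 - 2*r) with hρ
  have hρ0 : 0 ≤ ρ := (Real.rpow_pos_of_pos two_pos _).le
  have hρ1 : ρ < 1 := Real.rpow_lt_one_of_one_lt_of_neg one_lt_two (by linarith)
  set s : ℕ → ℕ → Set Ω := fun m j =>
    {ω | ENNReal.ofReal ((2:ℝ) ^ ((j:ℝ)*r) / (m+1)) ≤ G (2^j) ω} with hs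
  -- pointwise bound on P (s m j)
  have hbound : ∀ m j : ℕ, P (s m j) ≤ ENNReal.ofReal (((m:ℝ)+1) * Real.exp 1 * ρ^j) := by
    intro m j
    have hpos : (0:ℝ) < (2:ℝ) ^ ((j:ℝ)*r) / (m+1) := by
      apply div_pos (Real.rpow_pos_of_pos two_pos _) (by positivity)
    have h2j : (1:ℕ) ≤ 2^j := Nat.one_le_two_pow
    have h1 := W.markov (2^j) _ (ne_of_gt (ENNReal.ofReal_pos.mpr hpos)) ENNReal.ofReal_ne_top
    refine h1.trans ?_
    have h2 := W.sum_bound (2^j) h2j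
    refine (ENNReal.div_le_div_right h2 _).trans ?_
    apply ENNReal.div_le_of_le_mul
    rw [← ENNReal.ofReal_mul (by positivity)]
    apply ENNReal.ofReal_le_ofReal
    have hcast : ((2^j : ℕ) : ℝ)^(1-r) = (2:ℝ) ^ ((j:ℝ)*(1-r)) := by
      push_cast
      rw [← Real.rpow_natCast (2:ℝ) j, ← Real.rpow_mul (by norm_num)]
    have hρj : ρ ^ j = (2:ℝ) ^ ((1-2*r) * (j:ℝ)) := by
      rw [hρ, ← Real.rpow_natCast ((2:ℝ)^(1-2*r)) j, ← Real.rpow_mul (by norm_num)]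
    rw [hcast, hρj]
    rw [show ((m:ℝ)+1) * Real.exp 1 * (2:ℝ)^((1-2*r)*(j:ℝ)) * ((2:ℝ)^((j:ℝ)*r)/((m:ℝ)+1))
        = Real.exp 1 * ((2:ℝ)^((1-2*r)*(j:ℝ)) * (2:ℝ)^((j:ℝ)*r)) from by field_simp]
    rw [← Real.rpow_add two_pos]
    apply le_of_eq
    congr 1
    ring
  -- summability
  have htsum : ∀ m : ℕ, (∑' j, P (s m j)) ≠ ⊤ := by
    intro m
    have h1 : (∑' j, P (s m j)) ≤ ∑' j, ENNReal.ofReal (((m:ℝ)+1) * Real.exp 1 * ρ^j) :=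
      ENNReal.tsum_le_tsum (hbound m)
    have h2 : ∀ j : ℕ, ENNReal.ofReal (((m:ℝ)+1) * Real.exp 1 * ρ^j)
        = ENNReal.ofReal (((m:ℝ)+1) * Real.exp 1) * (ENNReal.ofReal ρ)^j := by
      intro j
      rw [← ENNReal.ofReal_pow hρ0, ← ENNReal.ofReal_mul (by positivity)]
    rw [tsum_congr h2, ENNReal.tsum_mul_left, ENNReal.tsum_geometric] at h1
    have hρlt : ENNReal.ofReal ρ < 1 := ENNReal.ofReal_lt_one.mpr hρ1
    have hne : (1 - ENNReal.ofReal ρ) ≠ 0 := by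
      intro h
      exact absurd (tsub_eq_zero_iff_le.mp h) (not_le.mpr hρlt)
    exact ne_top_of_le_ne_top
      (ENNReal.mul_ne_top ENNReal.ofReal_ne_top (ENNReal.inv_ne_top.mpr hne)) h1
  have hBC : ∀ᵐ ω ∂P, ∀ m : ℕ, ∀ᶠ j in atTop, ω ∉ s m j :=
    ae_all_iff.mpr (fun m => ae_eventually_notMem (htsum m))
  filter_upwards [hBC, W.norm_dichotomy] with ω hBCω hdich
  -- G is finite
  have hGfin : ∀ n, G n ω ≠ ⊤ := by
    intro n
    have hle : G n ω ≤ ∑ k ∈ Finset.Icc 1 n, 1 := by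
      apply Finset.sum_le_sum
      intro k _
      by_cases h : ω ∈ {ω' | W.X k ω' ≠ 0} <;> simp [h]
    refine ne_top_of_le_ne_top ?_ hle
    rw [Finset.sum_const, nsmul_eq_mul, mul_one]
    exact ENNReal.natCast_ne_top _
  -- Zstar = toReal of G
  have hZG : ∀ n : ℕ, W.Zstar n ω = (G n ω).toReal := by
    intro n
    rw [hG, MERWStops.Zstar]
    rw [ENNReal.toReal_sum (fun k _ => by
      by_cases h : ω ∈ {ω' | W.X k ω' ≠ 0} <;> simp [h])]
    refine Finset.sum_congr rfl fun k hk => ?_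
    have hk1 : 1 ≤ k := (Finset.mem_Icc.mp hk).1
    rcases hdich k hk1 with h0 | h1
    · have : ω ∉ {ω' | W.X k ω' ≠ 0} := by simp [h0]
      rw [Set.indicator_of_notMem this, h0]
      simp
    · have hne : W.X k ω ≠ 0 := by
        intro h; rw [h, norm_zero] at h1; norm_num at h1
      rw [Set.indicator_of_mem (by exact hne) 1, h1]
      simp
  have hmono : ∀ {n n' : ℕ}, n ≤ n' → W.Zstar n ω ≤ W.Zstar n' ω := by
    intro n n' h
    exact Finset.sum_le_sum_of_subset_of_nonneg
      (Finset.Icc_subset_Icc_right h) (fun k _ _ => by positivity)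
  have hnonneg : ∀ n, 0 ≤ W.Zstar n ω :=
    fun n => Finset.sum_nonneg fun k _ => by positivity
  rw [Metric.tendsto_atTop]
  intro ε hε
  obtain ⟨m, hm⟩ := exists_nat_gt ((2:ℝ)^r / ε)
  obtain ⟨J, hJ⟩ := (eventually_atTop).mp (hBCω m)
  refine ⟨2^(J+1), fun n hn => ?_⟩
  have hn1 : 1 ≤ n := le_trans Nat.one_le_two_pow hn
  set j := Nat.log 2 n with hj
  have hjJ : J + 1 ≤ j := (Nat.le_log_iff_pow_le one_lt_two (by omega)).mpr hn
  have hup : n < 2^(j+1) := Nat.lt_pow_succ_log_self (by norm_num) n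
  have hlo : 2^j ≤ n := Nat.pow_log_le_self 2 (by omega)
  have hnot := hJ (j+1) (by omega)
  have hnot' : ¬ (ENNReal.ofReal ((2:ℝ) ^ (((j+1:ℕ):ℝ)*r) / (m+1)) ≤ G (2^(j+1)) ω) := hnot
  have hGlt : (G (2^(j+1)) ω).toReal < (2:ℝ) ^ (((j+1:ℕ):ℝ)*r) / (m+1) := by
    have h := not_le.mp hnot'
    exact (ENNReal.lt_ofReal_iff_toReal_lt (hGfin _)).mp h
  have hZlt : W.Zstar n ω < (2:ℝ) ^ (((j+1:ℕ):ℝ)*r) / (m+1) :=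
    lt_of_le_of_lt (by rw [← hZG (2^(j+1))]; exact hmono (le_of_lt hup)) hGlt
  -- bound 2^((j+1)r) ≤ 2^r * n^r
  have hnpos : (0:ℝ) < (n:ℝ) := by exact_mod_cast hn1
  have hnr : (0:ℝ) < (n:ℝ)^r := Real.rpow_pos_of_pos hnpos r
  have hpow : (2:ℝ) ^ (((j+1:ℕ):ℝ)*r) ≤ (2:ℝ)^r * (n:ℝ)^r := by
    have h1 : (2:ℝ) ^ (((j+1:ℕ):ℝ)*r) = (2:ℝ)^r * ((2:ℝ)^((j:ℝ)))^r := by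
      have he : ((j+1:ℕ):ℝ) * r = r + (j:ℝ)*r := by push_cast; ring
      rw [he, Real.rpow_add two_pos, Real.rpow_mul (by norm_num)]
    rw [h1]
    apply mul_le_mul_of_nonneg_left _ (Real.rpow_nonneg (by norm_num) r)
    apply Real.rpow_le_rpow (Real.rpow_nonneg (by norm_num) _) _ hr0
    rw [Real.rpow_natCast]
    exact_mod_cast hlo
  have hfinal : W.Zstar n ω / (n:ℝ)^r < ε := by
    have h1 : W.Zstar n ω < (2:ℝ)^r * (n:ℝ)^r / (m+1) := by
      refine hZlt.trans_le ?_
      apply div_le_div_of_nonneg_right hpow (by positivity)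
    have h2 : W.Zstar n ω / (n:ℝ)^r < ((2:ℝ)^r * (n:ℝ)^r / (m+1)) / (n:ℝ)^r := by
      exact div_lt_div_of_pos_right h1 hnr
    have h3 : ((2:ℝ)^r * (n:ℝ)^r / (m+1)) / (n:ℝ)^r = (2:ℝ)^r / (m+1) := by
      field_simp
    rw [h3] at h2
    refine h2.trans ?_
    rw [div_lt_iff₀ (by positivity)]
    have h4 := (div_lt_iff₀ hε).mp hm
    have : (0:ℝ) ≤ m * ε := by positivity
    nlinarith
  rw [Real.dist_eq, sub_zero, abs_of_nonneg (div_nonneg (hnonneg n) hnr.le)]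
  exact hfinal
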